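/- arXiv:2010.12452 — 3 statements merged into one kernel-verified Lean document; each statement's English description precedes it below -/
import Mathlib

section
/- If a pca A is not extensional, then the relations ∼_α for α ≤ ω are pairwise distinct, even when restricted to elements of A. In particular, for each n there exist f, g ∈ A with f ∼_{n+1} g but f ≁_n g. -/
/-- A partial applicative structure: a set with a partial binary application. -/
structure PAS where
  carrier : Type
  app : carrier → carrier → Part carrier

namespace PAS

/-- Closed terms over a partial applicative structure. -/
inductive Term (A : PAS) : Type
  | const : A.carrier → Term A
  | app : Term A → Term A → Term A

/-- Evaluation of a closed term (a partial element of the carrier). -/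
def Term.eval {A : PAS} : Term A → Part A.carrier
  | .const a => Part.some a
  | .app s t => do
      let x ← Term.eval s
      let y ← Term.eval t
      A.app x y

/-- Kleene equality of closed terms: both undefined, or both defined and equal. -/
def KEq {A : PAS} (s t : Term A) : Prop := s.eval = t.eval

/-- The transfinite hierarchy of extensionality relations `∼_α` on closed terms:
`s ∼_0 t` iff `s ≃ t`; `s ∼_{α+1} t` iff `∀ x, s·x ∼_α t·x`; and at limits,
`s ∼_α t` iff `s ∼_β t` for some `β < α`. -/
noncomputable def sim (A : PAS) (α : Ordinal) : Term A → Term A → Prop :=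
  Ordinal.limitRecOn α
    (fun s t => KEq s t)
    (fun _ ih s t => ∀ x : A.carrier, ih (s.app (.const x)) (t.app (.const x)))
    (fun β _ ih s t => ∃ γ, ∃ h : γ < β, ih γ h s t)

end PAS

/-- A partial combinatory algebra: a partial applicative structure with
combinators `K` and `S` such that `K·a·b = a`, `S·a·b` is defined, and
`S·a·b·c ≃ a·c·(b·c)`. -/
structure PCA extends PAS where
  K : carrier
  S : carrier
  K_spec : ∀ a b : carrier, (app K a).bind (fun x => app x b) = Part.some a
  S_defined : ∀ a b : carrier, ((app S a).bind (fun x => app x b)).Dom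
  S_spec : ∀ a b c : carrier,
    ((app S a).bind (fun x => app x b)).bind (fun x => app x c)
      = (app a c).bind (fun u => (app b c).bind (fun v => app u v))

/-- A pca is extensional if f = g whenever f·x ≃ g·x for all x. -/
def PCA.Extensional (A : PCA) : Prop :=
  ∀ f g : A.carrier, (∀ x : A.carrier, A.app f x = A.app g x) → f = g

namespace PAS

lemma sim_zero (A : PAS) (s t : Term A) : A.sim 0 s t ↔ KEq s t := by
  simp [sim, Ordinal.limitRecOn_zero]

lemma sim_succ (A : PAS) (α : Ordinal) (s t : Term A) :
    A.sim (α + 1) s t ↔ ∀ x : A.carrier, A.sim α (s.app (.const x)) (t.app (.const x)) := by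
  rw [show α + 1 = Order.succ α from (Ordinal.add_one_eq_succ α)]
  simp [sim, Ordinal.limitRecOn_succ]

lemma sim_limit (A : PAS) (α : Ordinal) (hα : Order.IsSuccLimit α) (s t : Term A) :
    A.sim α s t ↔ ∃ γ, ∃ _ : γ < α, A.sim γ s t := by
  simp only [sim]
  rw [Ordinal.limitRecOn_limit _ _ _ _ hα]

lemma eval_app_congr (A : PAS) {s s' : Term A} (hs : s.eval = s'.eval) (x : A.carrier) :
    (s.app (.const x)).eval = (s'.app (.const x)).eval := by
  simp only [Term.eval, hs]

lemma sim_congr (A : PAS) (α : Ordinal) :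
    ∀ s t s' t' : Term A, s.eval = s'.eval → t.eval = t'.eval →
      (A.sim α s t ↔ A.sim α s' t') := by
  induction α using Ordinal.induction with
  | h α ih =>
    intro s t s' t' hs ht
    rcases Ordinal.zero_or_succ_or_isSuccLimit α with h0 | ⟨β, rfl⟩ | hl
    · subst h0
      simp only [sim_zero, KEq, hs, ht]
    · rw [← Ordinal.add_one_eq_succ]
      simp only [sim_succ]
      constructor
      · intro H x
        exact (ih β (Order.lt_succ β) _ _ _ _
          (A.eval_app_congr hs x) (A.eval_app_congr ht x)).1 (H x)
      · intro H x
        exact (ih β (Order.lt_succ β) _ _ _ _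
          (A.eval_app_congr hs x) (A.eval_app_congr ht x)).2 (H x)
    · simp only [sim_limit A α hl]
      constructor
      · rintro ⟨γ, hγ, H⟩
        exact ⟨γ, hγ, (ih γ hγ _ _ _ _ hs ht).1 H⟩
      · rintro ⟨γ, hγ, H⟩
        exact ⟨γ, hγ, (ih γ hγ _ _ _ _ hs ht).2 H⟩

lemma sim_le_succ (A : PAS) (α : Ordinal) :
    ∀ s t : Term A, A.sim α s t → A.sim (α + 1) s t := by
  induction α using Ordinal.induction with
  | h α ih =>
    intro s t H
    rcases Ordinal.zero_or_succ_or_isSuccLimit α with h0 | ⟨β, rfl⟩ | hl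
    · subst h0
      rw [sim_zero] at H
      rw [sim_succ]
      intro x
      rw [sim_zero]
      exact A.eval_app_congr H x
    · rw [← Ordinal.add_one_eq_succ] at *
      rw [sim_succ] at H
      rw [sim_succ]
      intro x
      exact ih β (Order.lt_succ β) _ _ (H x)
    · rw [sim_limit A α hl] at H
      obtain ⟨γ, hγ, H⟩ := H
      rw [sim_succ]
      intro x
      have := ih γ hγ _ _ H
      rw [sim_succ] at this
      rw [sim_limit A α hl]
      exact ⟨γ, hγ, this x⟩

universe u

lemma sim_nat_mono (A : PAS) {n m : ℕ} (hnm : n ≤ m) (s t : Term A)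
    (H : A.sim (n : Ordinal.{u}) s t) : A.sim (m : Ordinal.{u}) s t := by
  induction m with
  | zero => exact (Nat.le_zero.1 hnm) ▸ H
  | succ m ihm =>
    rcases Nat.lt_or_ge n (m+1) with hlt | hge
    · have := A.sim_le_succ (m : Ordinal.{u}) s t (ihm (Nat.lt_succ_iff.1 hlt))
      have hc : ((m+1 : ℕ) : Ordinal.{u}) = (m : Ordinal.{u}) + 1 := by push_cast; ring
      rw [hc]
      exact this
    · have : n = m + 1 := le_antisymm hnm hge
      exact this ▸ H

end PAS

namespace PCA

lemma K_dom (A : PCA) (a : A.carrier) : (A.app A.K a).Dom := by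
  have h : ((A.app A.K a).bind (fun x => A.app x a)).Dom := by
    rw [A.K_spec a a]; trivial
  exact h.fst

noncomputable def kl (A : PCA) (a : A.carrier) : A.carrier :=
  (A.app A.K a).get (A.K_dom a)

lemma app_K_eq (A : PCA) (a : A.carrier) : A.app A.K a = Part.some (A.kl a) :=
  (Part.get_eq_iff_eq_some.1 rfl)

lemma kl_app (A : PCA) (a b : A.carrier) : A.app (A.kl a) b = Part.some a := by
  have := A.K_spec a b
  rwa [A.app_K_eq a, Part.bind_some] at this

lemma eval_kl_app (A : PCA) (a x : A.carrier) :
    (PAS.Term.app (.const (A.kl a)) (.const x) : PAS.Term A.toPAS).eval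
      = (PAS.Term.const a : PAS.Term A.toPAS).eval := by
  simp [PAS.Term.eval, A.kl_app]

lemma sim_kl (A : PCA) (α : Ordinal) (a b : A.carrier) :
    A.toPAS.sim (α + 1) (.const (A.kl a)) (.const (A.kl b)) ↔
      A.toPAS.sim α (.const a) (.const b) := by
  rw [PAS.sim_succ]
  constructor
  · intro H
    exact (A.toPAS.sim_congr α _ _ _ _ (A.eval_kl_app a A.K) (A.eval_kl_app b A.K)).1 (H A.K)
  · intro H x
    exact (A.toPAS.sim_congr α _ _ _ _ (A.eval_kl_app a x) (A.eval_kl_app b x)).2 H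

end PCA

lemma PCA.key (A : PCA) (f g : A.carrier)
    (happ : ∀ x : A.carrier, A.app f x = A.app g x) (hne : f ≠ g) :
    ∀ n : ℕ,
      A.toPAS.sim ((n : Ordinal.{u}) + 1)
          (.const (Nat.rec f (fun _ a => A.kl a) n)) (.const (Nat.rec g (fun _ a => A.kl a) n)) ∧
      ¬ A.toPAS.sim (n : Ordinal.{u})
          (.const (Nat.rec f (fun _ a => A.kl a) n)) (.const (Nat.rec g (fun _ a => A.kl a) n)) := by
  intro n
  induction n with
  | zero =>
    constructor
    · rw [Nat.cast_zero, PAS.sim_succ]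
      intro x
      rw [PAS.sim_zero]
      show _ = _
      simp [PAS.Term.eval, happ x]
    · rw [Nat.cast_zero, PAS.sim_zero]
      intro hk
      have : (Part.some f : Part A.carrier) = Part.some g := hk
      exact hne (Part.some_injective this)
  | succ n ihn =>
    have hcast : ((n+1 : ℕ) : Ordinal.{u}) = (n : Ordinal.{u}) + 1 := by push_cast; ring
    constructor
    · show A.toPAS.sim _ (.const (A.kl _)) (.const (A.kl _))
      rw [hcast, A.sim_kl]
      exact ihn.1
    · show ¬ A.toPAS.sim _ (.const (A.kl _)) (.const (A.kl _))
      rw [hcast, A.sim_kl]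
      exact ihn.2

/-- If a pca A is not extensional, then the relations ∼_α for α ≤ ω are
pairwise distinct even restricted to elements of A; in particular for each n there
are f, g ∈ A with f ∼_{n+1} g but f ≁_n g. -/
theorem stmt4 (A : PCA) (h : ¬ A.Extensional) :
    (∀ α β : Ordinal, α < β → β ≤ Ordinal.omega0 →
      ∃ f g : A.carrier,
        A.toPAS.sim β (.const f) (.const g) ∧ ¬ A.toPAS.sim α (.const f) (.const g)) ∧
    (∀ n : ℕ, ∃ f g : A.carrier,
      A.toPAS.sim ((n : Ordinal) + 1) (.const f) (.const g) ∧
      ¬ A.toPAS.sim (n : Ordinal) (.const f) (.const g)) := by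
  simp only [PCA.Extensional, not_forall] at h
  obtain ⟨f, g, happ, hne⟩ := h
  refine ⟨?_, fun n => ⟨_, _, (A.key f g happ hne n).1, (A.key f g happ hne n).2⟩⟩
  intro α β hαβ hβω
  rcases eq_or_lt_of_le hβω with hβ | hβ
  · subst hβ
    obtain ⟨n, rfl⟩ := Ordinal.lt_omega0.1 hαβ
    refine ⟨_, _, ?_, (A.key f g happ hne n).2⟩
    rw [PAS.sim_limit _ _ Ordinal.isSuccLimit_omega0]
    exact ⟨_, by rw [← Nat.cast_add_one]; exact Ordinal.nat_lt_omega0 (n+1), (A.key f g happ hne n).1⟩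
  · obtain ⟨m, rfl⟩ := Ordinal.lt_omega0.1 hβ
    obtain ⟨n, rfl⟩ := Ordinal.lt_omega0.1 (hαβ.trans hβ)
    have hnm : n < m := by exact_mod_cast hαβ
    obtain ⟨m', rfl⟩ : ∃ m', m = m' + 1 := ⟨m - 1, by omega⟩
    refine ⟨Nat.rec f (fun _ a => A.kl a) m', Nat.rec g (fun _ a => A.kl a) m', ?_, ?_⟩
    · have := (A.key f g happ hne m').1
      rwa [← Nat.cast_add_one] at this
    · intro Hn
      exact (A.key f g happ hne m').2 (A.toPAS.sim_nat_mono (Nat.lt_succ_iff.1 hnm) _ _ Hn)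
end

section
/- In Kleene's first model K_1, there is a hereditarily total pair f ≠ g of elements such that f ≁_α g for every ordinal α. Specifically, there exist f ≠ g in ω with f·x = f and g·x = g for all x. -/
/-- Kleene's first model: the pca on ω with application n·m = Φ_n(m). -/
def K1 : PAS :=
  ⟨ℕ, fun n m => (Denumerable.ofNat Nat.Partrec.Code n).eval m⟩

/-- Iterated application of a term to a finite list of elements: t·σ(0)·…·σ(k-1). -/
def PAS.Term.appList {A : PAS} (t : PAS.Term A) (σ : List A.carrier) : PAS.Term A :=
  σ.foldl (fun s x => s.app (.const x)) t

/-- An element is hereditarily total if every iterated application to elements is defined. -/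
def PAS.HeredTotal (A : PAS) (a : A.carrier) : Prop :=
  ∀ σ : List A.carrier, ((PAS.Term.const a).appList σ).eval.Dom


section Aux

open Nat.Partrec (Code)
open Nat.Partrec.Code

lemma selfrep_code (m : ℕ) :
    ∃ c : Code, c.eval = fun _ => Part.some
      (if Encodable.encode c = m then m + 1 else Encodable.encode c) := by
  apply Nat.Partrec.Code.fixed_point₂
  have h1 : Computable (fun c : Code =>
      if Encodable.encode c = m then m + 1 else Encodable.encode c) := by
    have hnat : Primrec (fun n : ℕ => if n = m then m + 1 else n) :=
      Primrec.ite (Primrec.eq.comp Primrec.id (Primrec.const m))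
        (Primrec.const (m + 1)) Primrec.id
    exact hnat.to_comp.comp Computable.encode
  exact Computable₂.partrec₂ (h1.comp Computable.fst)

/-- Existence of a self-reproducing number, avoiding a given self-reproducing number. -/
lemma exists_selfrep' (m : ℕ) (hm : ∀ x : ℕ, K1.app m x = Part.some m) :
    ∃ n : ℕ, n ≠ m ∧ ∀ x : ℕ, K1.app n x = Part.some n := by
  obtain ⟨c, hc⟩ := selfrep_code m
  have hne : Encodable.encode c ≠ m := by
    intro h
    have h0 := congrFun hc 0
    rw [if_pos h] at h0
    have hcm : c = Denumerable.ofNat Code m := by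
      rw [← h, Denumerable.ofNat_encode]
    have h1 : c.eval 0 = Part.some m := by rw [hcm]; exact hm 0
    rw [h1] at h0
    have := Part.some_injective h0
    omega
  refine ⟨Encodable.encode c, hne, fun x => ?_⟩
  show (Denumerable.ofNat Code (Encodable.encode c)).eval x = _
  rw [Denumerable.ofNat_encode, hc]
  simp [hne]

lemma selfrep_code0 :
    ∃ c : Code, c.eval = fun _ => Part.some (Encodable.encode c) := by
  apply Nat.Partrec.Code.fixed_point₂
  exact Computable₂.partrec₂ (Computable.encode.comp Computable.fst)

lemma exists_selfrep_pair :
    ∃ f g : ℕ, f ≠ g ∧ (∀ x : ℕ, K1.app f x = Part.some f) ∧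
      (∀ x : ℕ, K1.app g x = Part.some g) := by
  obtain ⟨c, hc⟩ := selfrep_code0
  have hf : ∀ x : ℕ, K1.app (Encodable.encode c) x = Part.some (Encodable.encode c) := by
    intro x
    show (Denumerable.ofNat Code (Encodable.encode c)).eval x = _
    rw [Denumerable.ofNat_encode, hc]
  obtain ⟨g, hgf, hg⟩ := exists_selfrep' _ hf
  exact ⟨_, g, fun h => hgf h.symm, hf, hg⟩

lemma sim_zero (A : PAS) (s t : PAS.Term A) : A.sim 0 s t ↔ PAS.KEq s t := by
  unfold PAS.sim
  rw [Ordinal.limitRecOn_zero]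

lemma sim_succ (A : PAS) (β : Ordinal) (s t : PAS.Term A) :
    A.sim (Order.succ β) s t ↔
      ∀ x : A.carrier, A.sim β (s.app (.const x)) (t.app (.const x)) := by
  unfold PAS.sim
  rw [Ordinal.limitRecOn_succ]

lemma sim_limit (A : PAS) (β : Ordinal) (hβ : Order.IsSuccLimit β) (s t : PAS.Term A) :
    A.sim β s t ↔ ∃ γ, ∃ _ : γ < β, A.sim γ s t := by
  unfold PAS.sim
  rw [Ordinal.limitRecOn_limit _ _ _ _ hβ]

lemma eval_app_const {s : PAS.Term K1} {f : ℕ} (hs : s.eval = Part.some f)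
    (hf : ∀ x : ℕ, K1.app f x = Part.some f) (x : ℕ) :
    (s.app (.const x)).eval = Part.some f := by
  simp only [PAS.Term.eval, hs]
  exact (Part.bind_some _ _).trans ((Part.bind_some _ _).trans (hf x))

lemma heredTotal_of_selfrep {f : ℕ} (hf : ∀ x : ℕ, K1.app f x = Part.some f) :
    K1.HeredTotal f := by
  intro σ
  suffices h : ∀ (σ : List ℕ) (t : PAS.Term K1), t.eval = Part.some f →
      (t.appList σ).eval = Part.some f by
    rw [h σ (.const f) rfl]; trivial
  intro σ
  induction σ with
  | nil => intro t ht; exact ht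
  | cons x σ ih =>
    intro t ht
    exact ih _ (eval_app_const ht hf x)

lemma not_sim_of_selfrep {f g : ℕ} (hne : f ≠ g)
    (hf : ∀ x : ℕ, K1.app f x = Part.some f)
    (hg : ∀ x : ℕ, K1.app g x = Part.some g) :
    ∀ (α : Ordinal) (s t : PAS.Term K1), s.eval = Part.some f → t.eval = Part.some g →
      ¬ K1.sim α s t := by
  intro α
  induction α using Ordinal.limitRecOn with
  | zero =>
    intro s t hs ht h
    rw [sim_zero] at h
    have : Part.some f = Part.some g := by rw [← hs, ← ht]; exact h
    exact hne (by simpa using this)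
  | add_one β ih =>
    intro s t hs ht h
    rw [Ordinal.add_one_eq_succ, sim_succ] at h
    exact ih _ _ (eval_app_const hs hf 0) (eval_app_const ht hg 0) (h (0 : ℕ))
  | limit β hβ ih =>
    intro s t hs ht h
    rw [sim_limit _ _ hβ] at h
    obtain ⟨γ, hγ, h⟩ := h
    exact ih γ hγ _ _ hs ht h

end Aux

/-- In Kleene's first model there are hereditarily total f ≠ g with
f·x = f and g·x = g for all x, hence f ≁_α g for every ordinal α. -/
theorem stmt8 :
    ∃ f g : ℕ, f ≠ g ∧
      (∀ x : ℕ, K1.app f x = Part.some f) ∧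
      (∀ x : ℕ, K1.app g x = Part.some g) ∧
      K1.HeredTotal f ∧ K1.HeredTotal g ∧
      ∀ α : Ordinal, ¬ K1.sim α (.const f) (.const g) := by
  obtain ⟨f, g, hne, hf, hg⟩ := exists_selfrep_pair
  exact ⟨f, g, hne, hf, hg, heredTotal_of_selfrep hf, heredTotal_of_selfrep hg,
    fun α => not_sim_of_selfrep hne hf hg α _ _ rfl rfl⟩
end

section
/- For every X, Y ⊆ ω: the relativized Kleene model K_1^X embeds into K_1^Y if and only if X ≤_T Y; moreover when X ≤_T Y the embedding can be chosen computable. -/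
/-- Codes for oracle Turing machines (partial recursive functions relative to an oracle). -/
inductive OCode : Type
  | zero | succ | left | right | oracle
  | pair (a b : OCode) | comp (a b : OCode) | prec (a b : OCode) | rfind' (a : OCode)

/-- Evaluation of an oracle code relative to the oracle O. -/
def evalo (O : ℕ →. ℕ) : OCode → ℕ →. ℕ
  | .zero => pure 0
  | .succ => fun n => Part.some (n + 1)
  | .left => fun n => Part.some n.unpair.1
  | .right => fun n => Part.some n.unpair.2
  | .oracle => O
  | .pair cf cg => fun n => Nat.pair <$> evalo O cf n <*> evalo O cg n
  | .comp cf cg => fun n => evalo O cg n >>= evalo O cf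
  | .prec cf cg => fun n =>
      n.unpair.2.rec (evalo O cf n.unpair.1) fun y IH => do
        let i ← IH
        evalo O cg (Nat.pair n.unpair.1 (Nat.pair y i))
  | .rfind' cf => fun n =>
      (Nat.rfind fun m =>
        (fun x => x = 0) <$> evalo O cf (Nat.pair n.unpair.1 (m + n.unpair.2))).map
        (· + n.unpair.2)

/-- A numbering of the oracle codes by natural numbers. -/
def ocodeOfNat : ℕ → OCode
  | 0 => .zero
  | 1 => .succ
  | 2 => .left
  | 3 => .right
  | 4 => .oracle
  | (n + 5) =>
    match n.unpair.1 % 4 with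
    | 0 => .pair (ocodeOfNat n.unpair.2.unpair.1) (ocodeOfNat n.unpair.2.unpair.2)
    | 1 => .comp (ocodeOfNat n.unpair.2.unpair.1) (ocodeOfNat n.unpair.2.unpair.2)
    | 2 => .prec (ocodeOfNat n.unpair.2.unpair.1) (ocodeOfNat n.unpair.2.unpair.2)
    | _ => .rfind' (ocodeOfNat n.unpair.2)
  decreasing_by
    all_goals
      have h1 : n.unpair.2 ≤ n := Nat.unpair_right_le n
      have h2 : n.unpair.2.unpair.1 ≤ n.unpair.2 := Nat.unpair_left_le _
      have h3 : n.unpair.2.unpair.2 ≤ n.unpair.2 := Nat.unpair_right_le _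
      omega

open Classical in
/-- The characteristic function of a set of naturals, as a partial function. -/
noncomputable def chi (X : Set ℕ) : ℕ →. ℕ :=
  fun n => Part.some (if n ∈ X then 1 else 0)

/-- The relativized Kleene model K₁^X: the pca on ω with application n·m = Φ_n^X(m). -/
noncomputable def K1X (X : Set ℕ) : PAS :=
  ⟨ℕ, fun n m => evalo (chi X) (ocodeOfNat n) m⟩

/-- Turing reducibility: X ≤_T Y iff the characteristic function of X is partial
computable relative to (an oracle for) Y. -/
noncomputable def TuringRed (X Y : Set ℕ) : Prop :=
  ∃ c : OCode, ∀ n : ℕ, evalo (chi Y) c n = chi X n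

/-- An embedding of partial applicative structures: an injection preserving defined
applications and preserving undefinedness. -/
def PAS.IsEmbedding (A B : PAS) (F : A.carrier → B.carrier) : Prop :=
  Function.Injective F ∧
    ∀ a b : A.carrier,
      (∀ c : A.carrier, A.app a b = Part.some c → B.app (F a) (F b) = Part.some (F c)) ∧
      (¬ (A.app a b).Dom → ¬ (B.app (F a) (F b)).Dom)

namespace S17
open Nat.Partrec (Code)
open Nat.Partrec.Code

/-- Numeric encoding of oracle codes, a section of `ocodeOfNat`. -/
def encodeOC : OCode → ℕ
  | .zero => 0
  | .succ => 1
  | .left => 2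
  | .right => 3
  | .oracle => 4
  | .pair a b => Nat.pair 0 (Nat.pair (encodeOC a) (encodeOC b)) + 5
  | .comp a b => Nat.pair 1 (Nat.pair (encodeOC a) (encodeOC b)) + 5
  | .prec a b => Nat.pair 2 (Nat.pair (encodeOC a) (encodeOC b)) + 5
  | .rfind' a => Nat.pair 3 (encodeOC a) + 5

lemma ocodeOfNat_add5 (m : ℕ) : ocodeOfNat (m + 5) =
    match m.unpair.1 % 4 with
    | 0 => .pair (ocodeOfNat m.unpair.2.unpair.1) (ocodeOfNat m.unpair.2.unpair.2)
    | 1 => .comp (ocodeOfNat m.unpair.2.unpair.1) (ocodeOfNat m.unpair.2.unpair.2)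
    | 2 => .prec (ocodeOfNat m.unpair.2.unpair.1) (ocodeOfNat m.unpair.2.unpair.2)
    | _ => .rfind' (ocodeOfNat m.unpair.2) := by
  rw [ocodeOfNat]

lemma ocodeOfNat_encodeOC : ∀ c : OCode, ocodeOfNat (encodeOC c) = c := by
  intro c
  induction c with
  | zero => rw [encodeOC, ocodeOfNat]
  | succ => rw [encodeOC, ocodeOfNat]
  | left => rw [encodeOC, ocodeOfNat]
  | right => rw [encodeOC, ocodeOfNat]
  | oracle => rw [encodeOC, ocodeOfNat]
  | pair a b iha ihb => rw [encodeOC, ocodeOfNat_add5]; simp [iha, ihb]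
  | comp a b iha ihb => rw [encodeOC, ocodeOfNat_add5]; simp [iha, ihb]
  | prec a b iha ihb => rw [encodeOC, ocodeOfNat_add5]; simp [iha, ihb]
  | rfind' a iha => rw [encodeOC, ocodeOfNat_add5]; simp [iha]

lemma encodeOC_inj : Function.Injective encodeOC := by
  intro a b h
  rw [← ocodeOfNat_encodeOC a, ← ocodeOfNat_encodeOC b, h]

/-- Translation of oracle-free mathlib codes into oracle codes. -/
def toO : Code → OCode
  | .zero => .zero
  | .succ => .succ
  | .left => .left
  | .right => .right
  | .pair a b => .pair (toO a) (toO b)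
  | .comp a b => .comp (toO a) (toO b)
  | .prec a b => .prec (toO a) (toO b)
  | .rfind' a => .rfind' (toO a)

lemma evalo_toO (O : ℕ →. ℕ) : ∀ c : Code, evalo O (toO c) = c.eval := by
  intro c
  induction c with
  | zero => rfl
  | succ => rfl
  | left => rfl
  | right => rfl
  | pair a b iha ihb =>
      funext n; simp only [toO, evalo, eval, iha, ihb]
  | comp a b iha ihb =>
      funext n; simp only [toO, evalo, eval, iha, ihb]
  | prec a b iha ihb =>
      funext n; simp only [toO, evalo, eval, iha, ihb, Nat.unpaired]
  | rfind' a iha =>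
      funext n; simp only [toO, evalo, eval, iha, Nat.unpaired]

end S17
namespace S17
open Nat.Partrec (Code)
open Nat.Partrec.Code

def oId : OCode := .pair .left .right

@[simp] lemma evalo_oId (O : ℕ →. ℕ) (n : ℕ) : evalo O oId n = Part.some n := by
  simp [oId, evalo, Seq.seq]

def ocConst : ℕ → OCode
  | 0 => .zero
  | n + 1 => .comp .succ (ocConst n)

@[simp] lemma evalo_ocConst (O : ℕ →. ℕ) (n m : ℕ) :
    evalo O (ocConst n) m = Part.some n := by
  induction n generalizing m with
  | zero => rfl
  | succ n ih => simp [ocConst, evalo, ih]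

def oRfind (cf : OCode) : OCode := .comp (.rfind' cf) (.pair oId .zero)

lemma evalo_oRfind (O : ℕ →. ℕ) (cf : OCode) (n : ℕ) :
    evalo O (oRfind cf) n
      = Nat.rfind fun m => (fun x => x = 0) <$> evalo O cf (Nat.pair n m) := by
  have h0 : (pure 0 : ℕ →. ℕ) n = Part.some 0 := rfl
  simp only [oRfind, evalo, evalo_oId, h0, Seq.seq, Part.bind_eq_bind, Part.bind_some,
    Part.map_eq_map, Part.map_some, Nat.unpair_pair, Nat.pair_unpair, add_zero]
  exact Part.map_id' (fun a => rfl) _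

lemma primrec_pow : Primrec₂ ((· ^ ·) : ℕ → ℕ → ℕ) := by
  have h : Primrec (Nat.unpaired (· ^ ·)) := Primrec.nat_iff.2 Nat.Primrec.pow
  have := h.comp Primrec₂.natPair
  exact this.of_eq (by intro p; simp [Nat.unpaired])

/-- Oracle given by a finite table: `t = pair k bits`, answers `n < k` by the `n`-th bit. -/
def tableOracle (t : ℕ) : ℕ →. ℕ :=
  fun n => if n < t.unpair.1 then Part.some (t.unpair.2 / 2 ^ n % 2) else Part.none

lemma partrec_tableOracle : Nat.Partrec fun p : ℕ => tableOracle p.unpair.1 p.unpair.2 := by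
  erw [← Partrec.nat_iff]
  have pu : Primrec fun p : ℕ => p.unpair.2 := Primrec.snd.comp Primrec.unpair
  have pu11 : Primrec fun p : ℕ => p.unpair.1.unpair.1 :=
    Primrec.fst.comp (Primrec.unpair.comp (Primrec.fst.comp Primrec.unpair))
  have pu12 : Primrec fun p : ℕ => p.unpair.1.unpair.2 :=
    Primrec.snd.comp (Primrec.unpair.comp (Primrec.fst.comp Primrec.unpair))
  have hval : Primrec fun p : ℕ => p.unpair.1.unpair.2 / 2 ^ p.unpair.2 % 2 :=
    Primrec.nat_mod.comp
      (Primrec.nat_div.comp pu12 (primrec_pow.comp (Primrec.const 2) pu))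
      (Primrec.const 2)
  have hc : Computable fun p : ℕ =>
      (if p.unpair.2 < p.unpair.1.unpair.1
        then some (p.unpair.1.unpair.2 / 2 ^ p.unpair.2 % 2) else (none : Option ℕ)) :=
    (Primrec.ite (Primrec.nat_lt.comp pu pu11) (Primrec.option_some.comp hval)
      (Primrec.const none)).to_comp
  exact (Computable.ofOption hc).of_eq (by
    intro p
    by_cases h : p.unpair.2 < p.unpair.1.unpair.1 <;> simp [tableOracle, h, Part.ofOption])

end S17
namespace S17
open Nat.Partrec (Code)
open Nat.Partrec.Code

noncomputable def lookupC : Code :=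
  Classical.choose (exists_code.1 partrec_tableOracle)

lemma eval_lookupC :
    lookupC.eval = fun p : ℕ => tableOracle p.unpair.1 p.unpair.2 :=
  Classical.choose_spec (exists_code.1 partrec_tableOracle)

/-- Translate an oracle code to a plain code, using a finite table for the oracle. -/
noncomputable def trT (t : ℕ) : OCode → Code
  | .zero => .zero
  | .succ => .succ
  | .left => .left
  | .right => .right
  | .oracle => .comp lookupC (.pair (.const t) .id)
  | .pair a b => .pair (trT t a) (trT t b)
  | .comp a b => .comp (trT t a) (trT t b)
  | .prec a b => .prec (trT t a) (trT t b)
  | .rfind' a => .rfind' (trT t a)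

lemma eval_trT (t : ℕ) : ∀ c : OCode, (trT t c).eval = evalo (tableOracle t) c := by
  intro c
  induction c with
  | zero => rfl
  | succ => rfl
  | left => rfl
  | right => rfl
  | oracle =>
      funext n
      show (Code.comp lookupC (Code.pair (Code.const t) Code.id)).eval n
        = evalo (tableOracle t) OCode.oracle n
      have : evalo (tableOracle t) OCode.oracle n = tableOracle t n := rfl
      rw [this]
      simp [eval, eval_lookupC, Seq.seq, Code.eval_const, Code.eval_id, PFun.coe_val,
        Part.bind_some, Nat.unpair_pair, Nat.pair_unpair]
  | pair a b iha ihb => funext n; simp only [trT, eval, evalo, iha, ihb]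
  | comp a b iha ihb => funext n; simp only [trT, eval, evalo, iha, ihb]
  | prec a b iha ihb => funext n; simp only [trT, eval, evalo, iha, ihb, Nat.unpaired]
  | rfind' a iha => funext n; simp only [trT, eval, evalo, iha, Nat.unpaired]

lemma evalo_prec_zero (O : ℕ →. ℕ) (cf cg : OCode) (a : ℕ) :
    evalo O (.prec cf cg) (Nat.pair a 0) = evalo O cf a := by
  simp [evalo, Nat.unpair_pair]

lemma evalo_prec_succ (O : ℕ →. ℕ) (cf cg : OCode) (a k : ℕ) :
    evalo O (.prec cf cg) (Nat.pair a (k + 1))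
      = (evalo O (.prec cf cg) (Nat.pair a k)).bind
          fun i => evalo O cg (Nat.pair a (Nat.pair k i)) := by
  simp only [evalo, Nat.unpair_pair]
  rfl

lemma evalo_mono {O₁ O₂ : ℕ →. ℕ} (h : ∀ n a, a ∈ O₁ n → a ∈ O₂ n) :
    ∀ (c : OCode) (n a : ℕ), a ∈ evalo O₁ c n → a ∈ evalo O₂ c n := by
  intro c
  induction c with
  | zero => exact fun n a => id
  | succ => exact fun n a => id
  | left => exact fun n a => id
  | right => exact fun n a => id
  | oracle => exact h
  | pair cf cg ihf ihg =>
      intro n a ha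
      simp only [evalo, Seq.seq, Part.map_eq_map, Part.bind_eq_bind] at ha ⊢
      obtain ⟨x, hx, ha⟩ := Part.mem_bind_iff.1 ha
      obtain ⟨g, hg, rfl⟩ := (Part.mem_map_iff _).1 hx
      obtain ⟨y, hy, rfl⟩ := (Part.mem_map_iff _).1 ha
      exact Part.mem_bind_iff.2 ⟨Nat.pair g, (Part.mem_map_iff _).2 ⟨g, ihf _ _ hg, rfl⟩,
        (Part.mem_map_iff _).2 ⟨y, ihg _ _ hy, rfl⟩⟩
  | comp cf cg ihf ihg =>
      intro n a ha
      simp only [evalo, Part.bind_eq_bind] at ha ⊢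
      obtain ⟨x, hx, ha⟩ := Part.mem_bind_iff.1 ha
      exact Part.mem_bind_iff.2 ⟨x, ihg _ _ hx, ihf _ _ ha⟩
  | prec cf cg ihf ihg =>
      intro n a ha
      rw [← Nat.pair_unpair n] at ha ⊢
      generalize n.unpair.1 = x at *
      generalize n.unpair.2 = k at *
      clear n
      induction k generalizing a with
      | zero =>
          rw [evalo_prec_zero] at ha ⊢
          exact ihf _ _ ha
      | succ y ih =>
          rw [evalo_prec_succ] at ha ⊢
          obtain ⟨i, hi, hstep⟩ := Part.mem_bind_iff.1 ha
          exact Part.mem_bind_iff.2 ⟨i, ih _ hi, ihg _ _ hstep⟩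
  | rfind' cf ihf =>
      intro n a ha
      simp only [evalo, Part.map_eq_map] at ha ⊢
      obtain ⟨m, hm, rfl⟩ := (Part.mem_map_iff _).1 ha
      refine (Part.mem_map_iff _).2 ⟨m, ?_, rfl⟩
      obtain ⟨hspec, hmin⟩ := Nat.mem_rfind.1 hm
      refine Nat.mem_rfind.2 ⟨?_, ?_⟩
      · obtain ⟨b, hb, hb0⟩ := (Part.mem_map_iff _).1 hspec
        exact (Part.mem_map_iff _).2 ⟨b, ihf _ _ hb, hb0⟩
      · intro j hj
        obtain ⟨b, hb, hb0⟩ := (Part.mem_map_iff _).1 (hmin hj)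
        exact (Part.mem_map_iff _).2 ⟨b, ihf _ _ hb, hb0⟩

end S17
namespace S17
open Nat.Partrec (Code)
open Nat.Partrec.Code

open Classical in
/-- Characteristic function of `Z` as a total function. -/
noncomputable def chiN (Z : Set ℕ) (n : ℕ) : ℕ := if n ∈ Z then 1 else 0

lemma chi_eq (Z : Set ℕ) (n : ℕ) : chi Z n = Part.some (chiN Z n) := by
  by_cases h : n ∈ Z <;> simp [chi, chiN, h]

lemma chiN_le_one (Z : Set ℕ) (n : ℕ) : chiN Z n ≤ 1 := by
  by_cases h : n ∈ Z <;> simp [chiN, h]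

/-- Bits of the characteristic function of `Z` below `k`, packed into a number. -/
noncomputable def bitsZ (Z : Set ℕ) : ℕ → ℕ
  | 0 => 0
  | k + 1 => bitsZ Z k + chiN Z k * 2 ^ k

/-- The `k`-th finite table for the oracle `Z`. -/
noncomputable def tblZ (Z : Set ℕ) (k : ℕ) : ℕ := Nat.pair k (bitsZ Z k)

lemma bitsZ_lt (Z : Set ℕ) : ∀ k, bitsZ Z k < 2 ^ k := by
  intro k
  induction k with
  | zero => simp [bitsZ]
  | succ k ih =>
      have h1 : chiN Z k * 2 ^ k ≤ 2 ^ k :=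
        le_trans (Nat.mul_le_mul_right _ (chiN_le_one Z k)) (by simp)
      calc bitsZ Z (k + 1) = bitsZ Z k + chiN Z k * 2 ^ k := rfl
        _ < 2 ^ k + 2 ^ k := by omega
        _ = 2 ^ (k + 1) := by ring
lemma bitsZ_div (Z : Set ℕ) : ∀ {k n}, n < k → bitsZ Z k / 2 ^ n % 2 = chiN Z n := by
  intro k
  induction k with
  | zero => omega
  | succ k ih =>
      intro n hn
      rcases Nat.lt_succ_iff_lt_or_eq.1 hn with h | rfl
      · have hk : k - n - 1 + 1 + n = k := by omega
        have h2 : chiN Z k * 2 ^ k = chiN Z k * 2 ^ (k - n - 1) * 2 * 2 ^ n := by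
          have hp : (2:ℕ) ^ k = 2 ^ (k - n - 1) * 2 * 2 ^ n := by
            rw [← pow_succ, ← pow_add]; congr 1; omega
          rw [hp]; ring
        show (bitsZ Z k + chiN Z k * 2 ^ k) / 2 ^ n % 2 = chiN Z n
        rw [h2, Nat.add_mul_div_right _ _ (pow_pos (by norm_num) n),
          Nat.add_mul_mod_self_right, ih h]
      · show (bitsZ Z n + chiN Z n * 2 ^ n) / 2 ^ n % 2 = chiN Z n
        rw [Nat.add_mul_div_right _ _ (pow_pos (by norm_num) n),
          Nat.div_eq_of_lt (bitsZ_lt Z n), Nat.zero_add,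
          Nat.mod_eq_of_lt (by have := chiN_le_one Z n; omega)]

lemma tableZ_eq (Z : Set ℕ) (k n : ℕ) :
    tableOracle (tblZ Z k) n = if n < k then Part.some (chiN Z n) else Part.none := by
  by_cases h : n < k
  · simp [tableOracle, tblZ, Nat.unpair_pair, h, bitsZ_div Z h]
  · simp [tableOracle, tblZ, Nat.unpair_pair, h]

lemma tableZ_sound (Z : Set ℕ) (k : ℕ) :
    ∀ n a, a ∈ tableOracle (tblZ Z k) n → a ∈ chi Z n := by
  intro n a ha
  rw [tableZ_eq] at ha
  by_cases h : n < k
  · rw [if_pos h] at ha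
    rw [chi_eq]
    simpa using ha
  · rw [if_neg h] at ha
    simp at ha

lemma tableZ_mono (Z : Set ℕ) {k k' : ℕ} (h : k ≤ k') :
    ∀ n a, a ∈ tableOracle (tblZ Z k) n → a ∈ tableOracle (tblZ Z k') n := by
  intro n a ha
  rw [tableZ_eq] at ha ⊢
  by_cases hn : n < k
  · rw [if_pos hn] at ha
    rw [if_pos (lt_of_lt_of_le hn h)]
    exact ha
  · rw [if_neg hn] at ha
    simp at ha

/-- Gathering finitely many table bounds. -/
lemma exists_uniform {P : ℕ → ℕ → Prop} (mono : ∀ {j k k'}, k ≤ k' → P k j → P k' j)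
    (m : ℕ) (h : ∀ j, j ≤ m → ∃ k, P k j) : ∃ k, ∀ j, j ≤ m → P k j := by
  induction m with
  | zero =>
      obtain ⟨k, hk⟩ := h 0 (le_refl 0)
      exact ⟨k, fun j hj => by rw [Nat.le_zero.1 hj]; exact hk⟩
  | succ m ih =>
      obtain ⟨k₁, hk₁⟩ := ih fun j hj => h j (le_trans hj (Nat.le_succ m))
      obtain ⟨k₂, hk₂⟩ := h (m + 1) (le_refl _)
      refine ⟨max k₁ k₂, fun j hj => ?_⟩
      rcases eq_or_lt_of_le hj with rfl | h'
      · exact mono (le_max_right _ _) hk₂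
      · exact mono (le_max_left _ _) (hk₁ j (by omega))

lemma evalo_table_sound {Z : Set ℕ} {k : ℕ} (c : OCode) (n a : ℕ)
    (h : a ∈ evalo (tableOracle (tblZ Z k)) c n) : a ∈ evalo (chi Z) c n :=
  evalo_mono (tableZ_sound Z k) c n a h

lemma evalo_table_mono {Z : Set ℕ} {k k' : ℕ} (hk : k ≤ k') (c : OCode) (n a : ℕ)
    (h : a ∈ evalo (tableOracle (tblZ Z k)) c n) :
    a ∈ evalo (tableOracle (tblZ Z k')) c n :=
  evalo_mono (tableZ_mono Z hk) c n a h

lemma evalo_table_complete {Z : Set ℕ} :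
    ∀ (c : OCode) (n a : ℕ), a ∈ evalo (chi Z) c n →
      ∃ k, a ∈ evalo (tableOracle (tblZ Z k)) c n := by
  intro c
  induction c with
  | zero => exact fun n a ha => ⟨0, ha⟩
  | succ => exact fun n a ha => ⟨0, ha⟩
  | left => exact fun n a ha => ⟨0, ha⟩
  | right => exact fun n a ha => ⟨0, ha⟩
  | oracle =>
      intro n a ha
      refine ⟨n + 1, ?_⟩
      show a ∈ tableOracle (tblZ Z (n + 1)) n
      rw [tableZ_eq, if_pos (Nat.lt_succ_self n)]
      have ha' : a ∈ chi Z n := ha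
      rw [chi_eq] at ha'
      exact ha'
  | pair cf cg ihf ihg =>
      intro n a ha
      simp only [evalo, Seq.seq, Part.map_eq_map, Part.bind_eq_bind] at ha ⊢
      obtain ⟨x, hx, ha⟩ := Part.mem_bind_iff.1 ha
      obtain ⟨g, hg, rfl⟩ := (Part.mem_map_iff _).1 hx
      obtain ⟨y, hy, rfl⟩ := (Part.mem_map_iff _).1 ha
      obtain ⟨k₁, h₁⟩ := ihf _ _ hg
      obtain ⟨k₂, h₂⟩ := ihg _ _ hy
      refine ⟨max k₁ k₂, Part.mem_bind_iff.2 ⟨Nat.pair g,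
        (Part.mem_map_iff _).2 ⟨g, evalo_table_mono (le_max_left _ _) _ _ _ h₁, rfl⟩,
        (Part.mem_map_iff _).2 ⟨y, evalo_table_mono (le_max_right _ _) _ _ _ h₂, rfl⟩⟩⟩
  | comp cf cg ihf ihg =>
      intro n a ha
      simp only [evalo, Part.bind_eq_bind] at ha ⊢
      obtain ⟨x, hx, ha⟩ := Part.mem_bind_iff.1 ha
      obtain ⟨k₁, h₁⟩ := ihg _ _ hx
      obtain ⟨k₂, h₂⟩ := ihf _ _ ha
      exact ⟨max k₁ k₂, Part.mem_bind_iff.2 ⟨x,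
        evalo_table_mono (le_max_left _ _) _ _ _ h₁,
        evalo_table_mono (le_max_right _ _) _ _ _ h₂⟩⟩
  | prec cf cg ihf ihg =>
      intro n a ha
      rw [← Nat.pair_unpair n] at ha ⊢
      generalize n.unpair.1 = x at *
      generalize n.unpair.2 = m at *
      clear n
      induction m generalizing a with
      | zero =>
          rw [evalo_prec_zero] at ha
          obtain ⟨k, hk⟩ := ihf _ _ ha
          exact ⟨k, by rw [evalo_prec_zero]; exact hk⟩
      | succ y ih =>
          rw [evalo_prec_succ] at ha
          obtain ⟨i, hi, hstep⟩ := Part.mem_bind_iff.1 ha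
          obtain ⟨k₁, h₁⟩ := ih _ hi
          obtain ⟨k₂, h₂⟩ := ihg _ _ hstep
          refine ⟨max k₁ k₂, ?_⟩
          rw [evalo_prec_succ]
          exact Part.mem_bind_iff.2 ⟨i,
            evalo_table_mono (le_max_left _ _) _ _ _ h₁,
            evalo_table_mono (le_max_right _ _) _ _ _ h₂⟩
  | rfind' cf ihf =>
      intro n a ha
      simp only [evalo, Part.map_eq_map] at ha ⊢
      obtain ⟨m, hm, rfl⟩ := (Part.mem_map_iff _).1 ha
      obtain ⟨hspec, hmin⟩ := Nat.mem_rfind.1 hm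
      have hall : ∀ j, j ≤ m → ∃ k, ∃ b,
          b ∈ evalo (tableOracle (tblZ Z k)) cf (Nat.pair n.unpair.1 (j + n.unpair.2)) ∧
          (decide (b = 0) : Bool) = decide (j = m) := by
        intro j hj
        rcases Nat.lt_or_ge j m with h' | h'
        · obtain ⟨b, hb, hb0⟩ := (Part.mem_map_iff _).1 (hmin h')
          obtain ⟨k, hk⟩ := ihf _ _ hb
          exact ⟨k, b, hk, by simp [hb0, Nat.ne_of_lt h']⟩
        · have : j = m := le_antisymm hj h'
          subst this
          obtain ⟨b, hb, hb0⟩ := (Part.mem_map_iff _).1 hspec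
          obtain ⟨k, hk⟩ := ihf _ _ hb
          exact ⟨k, b, hk, by simp [hb0]⟩
      have := exists_uniform (P := fun k j => ∃ b,
          b ∈ evalo (tableOracle (tblZ Z k)) cf (Nat.pair n.unpair.1 (j + n.unpair.2)) ∧
          (decide (b = 0) : Bool) = decide (j = m))
        (fun {j k k'} hkk ⟨b, hb, h0⟩ => ⟨b, evalo_table_mono hkk _ _ _ hb, h0⟩) m hall
      obtain ⟨k, hk⟩ := this
      refine ⟨k, (Part.mem_map_iff _).2 ⟨m, Nat.mem_rfind.2 ⟨?_, ?_⟩, rfl⟩⟩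
      · obtain ⟨b, hb, h0⟩ := hk m (le_refl m)
        refine (Part.mem_map_iff _).2 ⟨b, hb, ?_⟩
        simpa using h0
      · intro j hj
        obtain ⟨b, hb, h0⟩ := hk j (le_of_lt hj)
        refine (Part.mem_map_iff _).2 ⟨b, hb, ?_⟩
        simp [Nat.ne_of_lt hj] at h0
        simp [h0]

end S17
namespace S17
open Nat.Partrec (Code)
open Nat.Partrec.Code

/-- One step of the strong recursion computing `trT`. -/
noncomputable def trG (t : ℕ) (l : List Code) : Code :=
  let n := l.length
  let m := n - 5
  let r := m.unpair.1 % 4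
  let a := (l[m.unpair.2.unpair.1]?).getD .zero
  let b := (l[m.unpair.2.unpair.2]?).getD .zero
  let c := (l[m.unpair.2]?).getD .zero
  if n = 0 then Code.zero
  else if n = 1 then Code.succ
  else if n = 2 then Code.left
  else if n = 3 then Code.right
  else if n = 4 then Code.comp lookupC (Code.pair (Code.const t) Code.id)
  else if r = 0 then Code.pair a b
  else if r = 1 then Code.comp a b
  else if r = 2 then Code.prec a b
  else Code.rfind' c

lemma computable_trG : Computable₂ trG := by
  have hlen : Computable fun p : ℕ × List Code => p.2.length :=
    (Primrec.list_length.comp Primrec.snd).to_comp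
  have hm : Computable fun p : ℕ × List Code => p.2.length - 5 :=
    (Primrec.nat_sub.comp (Primrec.list_length.comp Primrec.snd) (Primrec.const 5)).to_comp
  have hmp : Primrec fun p : ℕ × List Code => p.2.length - 5 :=
    Primrec.nat_sub.comp (Primrec.list_length.comp Primrec.snd) (Primrec.const 5)
  have hr : Primrec fun p : ℕ × List Code => (p.2.length - 5).unpair.1 % 4 :=
    Primrec.nat_mod.comp (Primrec.fst.comp (Primrec.unpair.comp hmp)) (Primrec.const 4)
  have hget : ∀ (ix : (ℕ × List Code) → ℕ), Primrec ix →
      Primrec fun p : ℕ × List Code => (p.2[ix p]?).getD Code.zero := by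
    intro ix hix
    exact Primrec.option_getD.comp (Primrec.list_getElem?.comp Primrec.snd hix)
      (Primrec.const Code.zero)
  have ha := hget _ (Primrec.fst.comp (Primrec.unpair.comp
    (Primrec.snd.comp (Primrec.unpair.comp hmp))))
  have hb := hget _ (Primrec.snd.comp (Primrec.unpair.comp
    (Primrec.snd.comp (Primrec.unpair.comp hmp))))
  have hc := hget _ (Primrec.snd.comp (Primrec.unpair.comp hmp))
  have horacle : Primrec fun p : ℕ × List Code =>
      Code.comp lookupC (Code.pair (Code.const p.1) Code.id) :=
    primrec₂_comp.comp (Primrec.const lookupC)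
      (primrec₂_pair.comp (primrec_const.comp Primrec.fst) (Primrec.const Code.id))
  have hlenp : Primrec fun p : ℕ × List Code => p.2.length :=
    Primrec.list_length.comp Primrec.snd
  have hEq : ∀ (k : ℕ), PrimrecPred fun p : ℕ × List Code => p.2.length = k := by
    intro k
    exact Primrec.eq.comp hlenp (Primrec.const k)
  have hrEq : ∀ (k : ℕ), PrimrecPred fun p : ℕ × List Code =>
      (p.2.length - 5).unpair.1 % 4 = k := by
    intro k
    exact Primrec.eq.comp hr (Primrec.const k)
  refine Primrec.to_comp ?_
  exact (Primrec.ite (hEq 0) (Primrec.const Code.zero)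
    (Primrec.ite (hEq 1) (Primrec.const Code.succ)
    (Primrec.ite (hEq 2) (Primrec.const Code.left)
    (Primrec.ite (hEq 3) (Primrec.const Code.right)
    (Primrec.ite (hEq 4) horacle
    (Primrec.ite (hrEq 0) (primrec₂_pair.comp ha hb)
    (Primrec.ite (hrEq 1) (primrec₂_comp.comp ha hb)
    (Primrec.ite (hrEq 2) (primrec₂_prec.comp ha hb)
    (primrec_rfind'.comp hc)))))))))

lemma computable_trT : Computable₂ fun t n => trT t (ocodeOfNat n) := by
  apply Computable.nat_strong_rec _ (Computable.option_some.comp₂ computable_trG)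
  intro t n
  congr 1
  have hlen : ((List.range n).map fun m => trT t (ocodeOfNat m)).length = n := by simp
  have hget : ∀ i, i < n →
      (((List.range n).map fun m => trT t (ocodeOfNat m))[i]?).getD Code.zero
        = trT t (ocodeOfNat i) := by
    intro i hi
    simp [List.getElem?_map, List.getElem?_range, hi]
  match n with
  | 0 =>
    rw [show ocodeOfNat 0 = OCode.zero from by rw [ocodeOfNat]]
    simp [trG, hlen, trT]
  | 1 =>
    rw [show ocodeOfNat 1 = OCode.succ from by rw [ocodeOfNat]]
    simp [trG, hlen, trT]
  | 2 =>
    rw [show ocodeOfNat 2 = OCode.left from by rw [ocodeOfNat]]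
    simp [trG, hlen, trT]
  | 3 =>
    rw [show ocodeOfNat 3 = OCode.right from by rw [ocodeOfNat]]
    simp [trG, hlen, trT]
  | 4 =>
    rw [show ocodeOfNat 4 = OCode.oracle from by rw [ocodeOfNat]]
    simp [trG, hlen, trT]
  | (m + 5) =>
    have h1 : m.unpair.1 ≤ m := Nat.unpair_left_le m
    have h2 : m.unpair.2 ≤ m := Nat.unpair_right_le m
    have h21 : m.unpair.2.unpair.1 ≤ m.unpair.2 := Nat.unpair_left_le _
    have h22 : m.unpair.2.unpair.2 ≤ m.unpair.2 := Nat.unpair_right_le _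
    have hr4 : m.unpair.1 % 4 < 4 := Nat.mod_lt _ (by norm_num)
    rw [ocodeOfNat_add5]
    simp only [trG, hlen]
    have e5 : m + 5 - 5 = m := by omega
    rw [e5]
    rw [hget _ (by omega), hget _ (by omega), hget _ (by omega)]
    have : m.unpair.1 % 4 = 0 ∨ m.unpair.1 % 4 = 1 ∨ m.unpair.1 % 4 = 2
        ∨ m.unpair.1 % 4 = 3 := by omega
    rcases this with h | h | h | h <;> rw [h] <;> simp [trT]

/-- Step-bounded evaluation of oracle codes against a finite oracle table,
as a total numeric function (`0` = not yet defined, `v+1` = value `v`). -/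
noncomputable def EvalnT (t c k x : ℕ) : ℕ :=
  Encodable.encode (Code.evaln k (trT t (ocodeOfNat c)) x)

lemma computable_EvalnT : Computable fun q : ℕ =>
    EvalnT q.unpair.1 q.unpair.2.unpair.1 q.unpair.2.unpair.2.unpair.1
      q.unpair.2.unpair.2.unpair.2 := by
  have pt : Computable fun q : ℕ => q.unpair.1 :=
    (Primrec.fst.comp Primrec.unpair).to_comp
  have pc : Computable fun q : ℕ => q.unpair.2.unpair.1 :=
    (Primrec.fst.comp (Primrec.unpair.comp (Primrec.snd.comp Primrec.unpair))).to_comp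
  have p22 : Primrec fun q : ℕ => q.unpair.2.unpair.2 :=
    Primrec.snd.comp (Primrec.unpair.comp (Primrec.snd.comp Primrec.unpair))
  have pk : Computable fun q : ℕ => q.unpair.2.unpair.2.unpair.1 :=
    (Primrec.fst.comp (Primrec.unpair.comp p22)).to_comp
  have px : Computable fun q : ℕ => q.unpair.2.unpair.2.unpair.2 :=
    (Primrec.snd.comp (Primrec.unpair.comp p22)).to_comp
  have hcode : Computable fun q : ℕ => trT q.unpair.1 (ocodeOfNat q.unpair.2.unpair.1) :=
    computable_trT.comp pt pc
  have hev : Computable fun q : ℕ =>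
      Code.evaln q.unpair.2.unpair.2.unpair.1
        (trT q.unpair.1 (ocodeOfNat q.unpair.2.unpair.1)) q.unpair.2.unpair.2.unpair.2 := by
    have := primrec_evaln.to_comp.comp
      ((Computable.pair (Computable.pair pk hcode) px))
    exact this
  exact Computable.encode.comp hev

lemma EvalnT_sound {Z : Set ℕ} {j c k x v : ℕ}
    (h : EvalnT (tblZ Z j) c k x = v + 1) :
    evalo (chi Z) (ocodeOfNat c) x = Part.some v := by
  have : Code.evaln k (trT (tblZ Z j) (ocodeOfNat c)) x = some v := by
    unfold EvalnT at h
    rcases h' : Code.evaln k (trT (tblZ Z j) (ocodeOfNat c)) x with _ | w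
    · rw [h'] at h; simp at h
    · rw [h'] at h
      have hw : Encodable.encode (some w) = w + 1 := rfl
      rw [hw] at h
      have : w = v := by omega
      rw [this]
  have h1 : v ∈ (trT (tblZ Z j) (ocodeOfNat c)).eval x := evaln_sound this
  rw [eval_trT] at h1
  exact Part.eq_some_iff.2 (evalo_table_sound _ _ _ h1)

lemma EvalnT_complete {Z : Set ℕ} {c x v : ℕ}
    (h : evalo (chi Z) (ocodeOfNat c) x = Part.some v) :
    ∃ j k, EvalnT (tblZ Z j) c k x = v + 1 := by
  obtain ⟨j, hj⟩ := evalo_table_complete (ocodeOfNat c) x v (Part.eq_some_iff.1 h)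
  rw [← eval_trT] at hj
  obtain ⟨k, hk⟩ := evaln_complete.1 hj
  refine ⟨j, k, ?_⟩
  unfold EvalnT
  rw [Option.mem_def.1 hk]
  simp [Encodable.encode_some, Encodable.encode_nat]

end S17
namespace S17
open Nat.Partrec (Code)
open Nat.Partrec.Code

@[simp] lemma evalo_right (O : ℕ →. ℕ) (n : ℕ) :
    evalo O OCode.right n = Part.some n.unpair.2 := rfl

@[simp] lemma evalo_left (O : ℕ →. ℕ) (n : ℕ) :
    evalo O OCode.left n = Part.some n.unpair.1 := rfl

lemma evalo_comp (O : ℕ →. ℕ) (cf cg : OCode) (n : ℕ) :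
    evalo O (.comp cf cg) n = (evalo O cg n).bind (evalo O cf) := by
  show evalo O cg n >>= evalo O cf = _
  erw [Part.bind_eq_bind]

lemma evalo_pair (O : ℕ →. ℕ) (cf cg : OCode) (n : ℕ) :
    evalo O (.pair cf cg) n
      = (evalo O cf n).bind fun a => (evalo O cg n).map fun b => Nat.pair a b := by
  show Nat.pair <$> evalo O cf n <*> evalo O cg n = _
  simp [Seq.seq, Part.bind_map, Part.map_eq_map, Part.bind_eq_bind]

/-- `f` is total computable relative to the oracle `O`. -/
def OComp (O : ℕ →. ℕ) (f : ℕ → ℕ) : Prop :=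
  ∃ c : OCode, ∀ n, evalo O c n = Part.some (f n)

lemma OComp.of_computable {O : ℕ →. ℕ} {f : ℕ → ℕ} (h : Computable f) : OComp O f := by
  obtain ⟨c, hc⟩ := exists_code.1 (Partrec.nat_iff.1 h.partrec)
  exact ⟨toO c, fun n => by rw [evalo_toO, hc]; rfl⟩

lemma OComp.comp {O : ℕ →. ℕ} {f g : ℕ → ℕ} (hf : OComp O f) (hg : OComp O g) :
    OComp O fun n => f (g n) := by
  obtain ⟨cf, hcf⟩ := hf
  obtain ⟨cg, hcg⟩ := hg
  exact ⟨.comp cf cg, fun n => by erw [evalo_comp, hcg, Part.bind_some, hcf]⟩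

lemma OComp.pair {O : ℕ →. ℕ} {f g : ℕ → ℕ} (hf : OComp O f) (hg : OComp O g) :
    OComp O fun n => Nat.pair (f n) (g n) := by
  obtain ⟨cf, hcf⟩ := hf
  obtain ⟨cg, hcg⟩ := hg
  exact ⟨.pair cf cg, fun n => by
    rw [evalo_pair, hcf, Part.bind_some, hcg, Part.map_some]⟩

lemma OComp.id {O : ℕ →. ℕ} : OComp O _root_.id := ⟨oId, fun n => by simp⟩

lemma OComp.of_eq {O : ℕ →. ℕ} {f g : ℕ → ℕ} (h : OComp O f) (H : ∀ n, f n = g n) :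
    OComp O g := by
  obtain ⟨c, hc⟩ := h
  exact ⟨c, fun n => by rw [hc, H]⟩

/-- Primitive recursion relative to an oracle. -/
lemma OComp.natrec {O : ℕ →. ℕ} {s : ℕ → ℕ → ℕ} (b : ℕ)
    (hs : OComp O fun p => s p.unpair.1 p.unpair.2) :
    OComp O fun n => Nat.rec b (fun k ih => s k ih) n := by
  obtain ⟨cs, hcs⟩ := hs
  refine ⟨.comp (.prec (ocConst b) (.comp cs .right)) (.pair .zero oId), fun n => ?_⟩
  have key : ∀ m, evalo O (.prec (ocConst b) (.comp cs .right)) (Nat.pair 0 m)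
      = Part.some (Nat.rec b (fun k ih => s k ih) m) := by
    intro m
    induction m with
    | zero => rw [evalo_prec_zero, evalo_ocConst]; rfl
    | succ k ih =>
        erw [evalo_prec_succ, ih, Part.bind_some, evalo_comp, evalo_right, Part.bind_some,
          Nat.unpair_pair, hcs]
        simp [Nat.unpair_pair]
  have hz : evalo O OCode.zero n = Part.some 0 := rfl
  erw [evalo_comp, evalo_pair, hz, Part.bind_some, evalo_oId, Part.map_some, Part.bind_some, key]

lemma OComp_tblZ {O : ℕ →. ℕ} {Z : Set ℕ} (c₀ : OCode)
    (hc₀ : ∀ n, evalo O c₀ n = chi Z n) : OComp O (tblZ Z) := by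
  have hchi : OComp O (chiN Z) := ⟨c₀, fun n => by rw [hc₀, chi_eq]⟩
  have hs : OComp O fun p =>
      Nat.pair (p.unpair.1 + 1) (p.unpair.2.unpair.2 + chiN Z p.unpair.1 * 2 ^ p.unpair.1) := by
    have h1 : OComp O fun p => Nat.pair (chiN Z p.unpair.1) p := by
      have hu1 : Computable fun p : ℕ => p.unpair.1 := (Primrec.fst.comp Primrec.unpair).to_comp
      exact OComp.pair (hchi.comp (OComp.of_computable hu1)) OComp.id
    have h2 : Computable fun r : ℕ =>
        Nat.pair (r.unpair.2.unpair.1 + 1)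
          (r.unpair.2.unpair.2.unpair.2 + r.unpair.1 * 2 ^ r.unpair.2.unpair.1) := by
      have pu1 : Primrec fun r : ℕ => r.unpair.1 := Primrec.fst.comp Primrec.unpair
      have pu2 : Primrec fun r : ℕ => r.unpair.2 := Primrec.snd.comp Primrec.unpair
      have p21 : Primrec fun r : ℕ => r.unpair.2.unpair.1 :=
        Primrec.fst.comp (Primrec.unpair.comp pu2)
      have p22 : Primrec fun r : ℕ => r.unpair.2.unpair.2 :=
        Primrec.snd.comp (Primrec.unpair.comp pu2)
      have p222 : Primrec fun r : ℕ => r.unpair.2.unpair.2.unpair.2 :=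
        Primrec.snd.comp (Primrec.unpair.comp p22)
      exact (Primrec₂.natPair.comp (Primrec.nat_add.comp p21 (Primrec.const 1))
        (Primrec.nat_add.comp p222
          (Primrec.nat_mul.comp pu1 (primrec_pow.comp (Primrec.const 2) p21)))).to_comp
    refine ((OComp.of_computable h2).comp h1).of_eq fun p => ?_
    simp [Nat.unpair_pair]
  have := (OComp.natrec (s := fun a b =>
      Nat.pair (a + 1) (b.unpair.2 + chiN Z a * 2 ^ a)) (Nat.pair 0 0) hs).of_eq
    (g := tblZ Z) ?_
  · exact this
  · intro n
    induction n with
    | zero => rfl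
    | succ k ih =>
        rw [show (Nat.rec (Nat.pair 0 0) (fun k ih =>
            Nat.pair (k + 1) (ih.unpair.2 + chiN Z k * 2 ^ k)) (k+1) : ℕ)
          = Nat.pair (k + 1) (((Nat.rec (Nat.pair 0 0) (fun k ih =>
            Nat.pair (k + 1) (ih.unpair.2 + chiN Z k * 2 ^ k)) k : ℕ)).unpair.2
              + chiN Z k * 2 ^ k) from rfl, ih]
        show Nat.pair (k + 1) ((Nat.unpair (Nat.pair k (bitsZ Z k))).2 + chiN Z k * 2 ^ k)
          = Nat.pair (k + 1) (bitsZ Z (k + 1))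
        rw [Nat.unpair_pair]
        rfl

end S17
namespace S17
open Nat.Partrec (Code)
open Nat.Partrec.Code

lemma rfind_total_mem {pb : ℕ → Bool} (h : ∃ m, pb m = true) :
    ∃ m₀, m₀ ∈ Nat.rfind (fun m => Part.some (pb m)) := by
  obtain ⟨m, hm⟩ := h
  have hdom : (Nat.rfind (fun m => Part.some (pb m))).Dom :=
    Nat.rfind_dom.2 ⟨m, by simpa using hm, fun {j} _ => trivial⟩
  exact Part.dom_iff_mem.1 hdom

lemma rfind_total_spec {pb : ℕ → Bool} {m₀ : ℕ}
    (h : m₀ ∈ Nat.rfind (fun m => Part.some (pb m))) : pb m₀ = true := by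
  have := Nat.rfind_spec h
  simpa using this

/-- The generic dovetailing searcher relative to an oracle. -/
lemma exists_search (O : ℕ →. ℕ) {T : ℕ → ℕ} (hT : OComp O T)
    {pr fin : ℕ → ℕ → ℕ} (hpr : Computable₂ pr) (hfin : Computable₂ fin) :
    ∃ D : OCode, ∀ z : ℕ,
      evalo O D z =
        (Nat.rfind fun m => Part.some (decide (pr (T m.unpair.1) (Nat.pair z m) = 0))).bind
          fun m => Part.some (fin (T m.unpair.1) (Nat.pair z m)) := by
  have hu21 : Computable fun w : ℕ => w.unpair.2.unpair.1 :=
    (Primrec.fst.comp (Primrec.unpair.comp (Primrec.snd.comp Primrec.unpair))).to_comp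
  have harg : OComp O fun w => Nat.pair (T w.unpair.2.unpair.1) w :=
    OComp.pair (hT.comp (OComp.of_computable hu21)) OComp.id
  have hprq : Computable fun q : ℕ => pr q.unpair.1 q.unpair.2 :=
    hpr.comp ((Primrec.fst.comp Primrec.unpair).to_comp)
      ((Primrec.snd.comp Primrec.unpair).to_comp)
  have hfinq : Computable fun q : ℕ => fin q.unpair.1 q.unpair.2 :=
    hfin.comp ((Primrec.fst.comp Primrec.unpair).to_comp)
      ((Primrec.snd.comp Primrec.unpair).to_comp)
  obtain ⟨cb, hcb⟩ := ((OComp.of_computable hprq).comp harg).of_eq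
    (g := fun w => pr (T w.unpair.2.unpair.1) w) (fun w => by simp [Nat.unpair_pair])
  obtain ⟨cf, hcf⟩ := ((OComp.of_computable hfinq).comp harg).of_eq
    (g := fun w => fin (T w.unpair.2.unpair.1) w) (fun w => by simp [Nat.unpair_pair])
  refine ⟨.comp cf (.pair oId (oRfind cb)), fun z => ?_⟩
  rw [evalo_comp, evalo_pair, evalo_oId, Part.bind_some, evalo_oRfind]
  simp only [hcb, hcf, Part.map_eq_map, Part.map_some, Nat.unpair_pair]
  erw [Part.bind_map]
  congr 1
  funext m
  rw [hcf]
  simp [Nat.unpair_pair]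

/-- Packed version of `EvalnT` matching the searcher's calling convention:
`w = pair (pair c x) m`, table `t`, step bound `m.unpair.2`. -/
noncomputable def ETW (t w : ℕ) : ℕ :=
  EvalnT t w.unpair.1.unpair.1 w.unpair.2.unpair.2 w.unpair.1.unpair.2

lemma computable_ETW : Computable₂ ETW := by
  have hpack : Primrec fun p : ℕ × ℕ =>
      Nat.pair p.1 (Nat.pair p.2.unpair.1.unpair.1
        (Nat.pair p.2.unpair.2.unpair.2 p.2.unpair.1.unpair.2)) := by
    have pu1 : Primrec fun p : ℕ × ℕ => p.2.unpair.1 :=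
      Primrec.fst.comp (Primrec.unpair.comp Primrec.snd)
    have pu2 : Primrec fun p : ℕ × ℕ => p.2.unpair.2 :=
      Primrec.snd.comp (Primrec.unpair.comp Primrec.snd)
    exact Primrec₂.natPair.comp Primrec.fst
      (Primrec₂.natPair.comp (Primrec.fst.comp (Primrec.unpair.comp pu1))
        (Primrec₂.natPair.comp (Primrec.snd.comp (Primrec.unpair.comp pu2))
          (Primrec.snd.comp (Primrec.unpair.comp pu1))))
  have := computable_EvalnT.comp hpack.to_comp
  refine this.of_eq fun p => ?_
  simp [ETW, Nat.unpair_pair]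

lemma exists_univ {O : ℕ →. ℕ} {Z : Set ℕ} (c₀ : OCode)
    (hc₀ : ∀ n, evalo O c₀ n = chi Z n) :
    ∃ U : OCode, ∀ c x : ℕ,
      evalo O U (Nat.pair c x) = evalo (chi Z) (ocodeOfNat c) x := by
  have hT := OComp_tblZ c₀ hc₀
  have hETW : Computable fun p : ℕ × ℕ => ETW p.1 p.2 := computable_ETW
  have hbool : Computable fun p : ℕ × ℕ => decide (ETW p.1 p.2 = 0) :=
    Primrec.eq.decide.to_comp.comp hETW (Computable.const 0)
  have hpr : Computable₂ fun t w => (if ETW t w = 0 then 1 else 0 : ℕ) := by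
    have := Computable.cond hbool (Computable.const (1 : ℕ)) (Computable.const (0 : ℕ))
    refine this.of_eq fun p => ?_
    by_cases h : ETW p.1 p.2 = 0 <;> simp [h]
  have hfin : Computable₂ fun t w => ETW t w - 1 :=
    Primrec.nat_sub.to_comp.comp hETW (Computable.const 1)
  obtain ⟨U, hU⟩ := exists_search O hT hpr hfin
  refine ⟨U, fun c x => ?_⟩
  rw [hU]
  have hETWz : ∀ m : ℕ, ETW (tblZ Z m.unpair.1) (Nat.pair (Nat.pair c x) m)
      = EvalnT (tblZ Z m.unpair.1) c m.unpair.2 x := by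
    intro m
    simp [ETW, Nat.unpair_pair]
  by_cases hD : (evalo (chi Z) (ocodeOfNat c) x).Dom
  · obtain ⟨v, hv⟩ := Part.dom_iff_mem.1 hD
    have hv' : evalo (chi Z) (ocodeOfNat c) x = Part.some v := Part.eq_some_iff.2 hv
    rw [hv']
    obtain ⟨j, k, hjk⟩ := EvalnT_complete hv'
    have hex : ∃ m : ℕ, (decide ((if ETW (tblZ Z m.unpair.1)
        (Nat.pair (Nat.pair c x) m) = 0 then 1 else 0 : ℕ) = 0)) = true := by
      refine ⟨Nat.pair j k, ?_⟩
      rw [hETWz]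
      simp [Nat.unpair_pair, hjk]
    obtain ⟨m₀, hm₀⟩ := rfind_total_mem hex
    have hspec := rfind_total_spec hm₀
    rw [hETWz] at hspec
    have hne : EvalnT (tblZ Z m₀.unpair.1) c m₀.unpair.2 x ≠ 0 := by
      by_contra h0
      simp [h0] at hspec
    obtain ⟨w, hw⟩ := Nat.exists_eq_succ_of_ne_zero hne
    have hsound := EvalnT_sound (Z := Z) hw
    have hwv : w = v := by
      rw [hv'] at hsound
      exact (Part.some_inj.1 hsound).symm
    refine Part.eq_some_iff.2 (Part.mem_bind_iff.2 ⟨m₀, hm₀, ?_⟩)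
    rw [hETWz, hw]
    simp [hwv]
  · rw [Part.eq_none_iff'.2 hD]
    refine Part.eq_none_iff'.2 ?_
    intro hdom
    obtain ⟨v, hv⟩ := Part.dom_iff_mem.1 hdom
    obtain ⟨m₀, hm₀, _⟩ := Part.mem_bind_iff.1 hv
    have hspec := rfind_total_spec hm₀
    rw [hETWz] at hspec
    have hne : EvalnT (tblZ Z m₀.unpair.1) c m₀.unpair.2 x ≠ 0 := by
      by_contra h0
      simp [h0] at hspec
    obtain ⟨w, hw⟩ := Nat.exists_eq_succ_of_ne_zero hne
    have hsound := EvalnT_sound (Z := Z) hw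
    rw [hsound] at hD
    exact hD trivial

end S17
namespace S17
open Nat.Partrec (Code)
open Nat.Partrec.Code

def eComp (a b : ℕ) : ℕ := Nat.pair 1 (Nat.pair a b) + 5

def ePair (a b : ℕ) : ℕ := Nat.pair 0 (Nat.pair a b) + 5

def cIdx : ℕ → ℕ := fun n => Nat.rec 0 (fun _ ih => Nat.pair 1 (Nat.pair 1 ih) + 5) n

lemma oc_eComp (a b : ℕ) :
    ocodeOfNat (eComp a b) = .comp (ocodeOfNat a) (ocodeOfNat b) := by
  rw [eComp, ocodeOfNat_add5]
  simp [Nat.unpair_pair]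

lemma oc_ePair (a b : ℕ) :
    ocodeOfNat (ePair a b) = .pair (ocodeOfNat a) (ocodeOfNat b) := by
  rw [ePair, ocodeOfNat_add5]
  simp [Nat.unpair_pair]

lemma oc_cIdx (n : ℕ) : ocodeOfNat (cIdx n) = ocConst n := by
  induction n with
  | zero =>
      show ocodeOfNat 0 = ocConst 0
      rw [show ocodeOfNat 0 = OCode.zero from by rw [ocodeOfNat]]
      rfl
  | succ k ih =>
      show ocodeOfNat (eComp 1 (cIdx k)) = ocConst (k + 1)
      rw [oc_eComp, ih, show ocodeOfNat 1 = OCode.succ from by rw [ocodeOfNat]]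
      rfl

lemma primrec_cIdx : Primrec cIdx :=
  Primrec.nat_rec₁ 0 ((Primrec.nat_add.comp
    (Primrec₂.natPair.comp (Primrec.const 1)
      (Primrec₂.natPair.comp (Primrec.const 1) Primrec.snd))
    (Primrec.const 5)).to₂)

lemma primrec_eComp : Primrec₂ eComp :=
  Primrec.nat_add.comp
    (Primrec₂.natPair.comp (Primrec.const 1) (Primrec₂.natPair.comp Primrec.fst Primrec.snd))
    (Primrec.const 5)

lemma primrec_ePair : Primrec₂ ePair :=
  Primrec.nat_add.comp
    (Primrec₂.natPair.comp (Primrec.const 0) (Primrec₂.natPair.comp Primrec.fst Primrec.snd))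
    (Primrec.const 5)

/-- Kleene's recursion theorem, relative to an oracle with a universal machine. -/
lemma rec_thm {O : ℕ →. ℕ} (univ : OCode)
    (hU : ∀ c x, evalo O univ (Nat.pair c x) = evalo O (ocodeOfNat c) x)
    (h : ℕ → ℕ) (hh : Computable h) :
    ∃ e, ∀ y, evalo O (ocodeOfNat e) y = evalo O (ocodeOfNat (h e)) y := by
  set uI := encodeOC univ with huI
  set g : ℕ → ℕ := fun x => eComp uI (ePair (eComp uI (cIdx (Nat.pair x x))) (encodeOC oId))
    with hgdef
  have hg : Primrec g := by
    refine Primrec₂.comp primrec_eComp (Primrec.const uI) ?_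
    refine Primrec₂.comp primrec_ePair ?_ (Primrec.const (encodeOC oId))
    exact Primrec₂.comp primrec_eComp (Primrec.const uI)
      (primrec_cIdx.comp (Primrec₂.natPair.comp Primrec.id Primrec.id))
  have hgsem : ∀ x u y, evalo O (ocodeOfNat x) x = Part.some u →
      evalo O (ocodeOfNat (g x)) y = evalo O (ocodeOfNat u) y := by
    intro x u y hxx
    rw [hgdef]
    simp only
    rw [oc_eComp, oc_ePair, oc_eComp, oc_cIdx, ocodeOfNat_encodeOC, ocodeOfNat_encodeOC]
    erw [evalo_comp, evalo_pair, evalo_comp, evalo_ocConst, Part.bind_some, hU, hxx,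
      Part.bind_some, evalo_oId, Part.map_some, Part.bind_some, hU]
  have hcomp : Computable fun x => h (g x) := hh.comp hg.to_comp
  obtain ⟨ca, hca⟩ := exists_code.1 (Partrec.nat_iff.1 hcomp.partrec)
  set a := encodeOC (toO ca) with hadef
  have ha : ∀ x, evalo O (ocodeOfNat a) x = Part.some (h (g x)) := by
    intro x
    rw [hadef, ocodeOfNat_encodeOC, evalo_toO, hca]
    rfl
  exact ⟨g a, fun y => hgsem a (h (g a)) y (ha a)⟩

end S17
namespace S17
open Nat.Partrec (Code)
open Nat.Partrec.Code

def extIx (x : ℕ) : ℕ := (x - 5).unpair.1 / 4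

noncomputable def buildF (e n : ℕ) : ℕ :=
  Nat.pair (4 * n + 1) (Nat.pair e (ePair (cIdx n) (encodeOC oId))) + 5

lemma oc_buildF (e n : ℕ) :
    ocodeOfNat (buildF e n) = .comp (ocodeOfNat e) (.pair (ocConst n) oId) := by
  rw [buildF, ocodeOfNat_add5]
  have hmod : (Nat.pair (4 * n + 1) (Nat.pair e (ePair (cIdx n) (encodeOC oId)))).unpair.1 % 4
      = 1 := by
    rw [Nat.unpair_pair]
    omega
  rw [hmod]
  simp only [Nat.unpair_pair]
  rw [oc_ePair, oc_cIdx, ocodeOfNat_encodeOC]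

lemma extIx_buildF (e n : ℕ) : extIx (buildF e n) = n := by
  rw [buildF, extIx, Nat.add_sub_cancel, Nat.unpair_pair]
  omega

lemma primrec_buildF : Primrec₂ buildF := by
  refine Primrec.nat_add.comp ?_ (Primrec.const 5)
  refine Primrec₂.natPair.comp
    (Primrec.nat_add.comp (Primrec.nat_mul.comp (Primrec.const 4) Primrec.snd)
      (Primrec.const 1)) ?_
  exact Primrec₂.natPair.comp Primrec.fst
    (primrec_ePair.comp (primrec_cIdx.comp Primrec.snd) (Primrec.const (encodeOC oId)))

lemma backward {X Y : Set ℕ} (hXY : TuringRed X Y) :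
    ∃ F : ℕ → ℕ, PAS.IsEmbedding (K1X X) (K1X Y) F ∧ Computable F := by
  obtain ⟨c₀, hc₀⟩ := hXY
  obtain ⟨uX, huX⟩ := exists_univ (O := chi Y) (Z := X) c₀ hc₀
  obtain ⟨uY, huY⟩ := exists_univ (O := chi Y) (Z := Y) .oracle (fun n => rfl)
  -- the "pre" code: p ↦ pair p.1 (extIx p.2)
  have hpre : Computable fun p : ℕ => Nat.pair p.unpair.1 (extIx p.unpair.2) := by
    have pu1 : Primrec fun p : ℕ => p.unpair.1 := Primrec.fst.comp Primrec.unpair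
    have pu2 : Primrec fun p : ℕ => p.unpair.2 := Primrec.snd.comp Primrec.unpair
    exact (Primrec₂.natPair.comp pu1
      (Primrec.nat_div.comp
        (Primrec.fst.comp (Primrec.unpair.comp (Primrec.nat_sub.comp pu2 (Primrec.const 5))))
        (Primrec.const 4))).to_comp
  obtain ⟨cpre, hcpre⟩ := exists_code.1 (Partrec.nat_iff.1 hpre.partrec)
  -- the "bf2" code: q ↦ buildF q.1 q.2
  have hbf2 : Computable fun q : ℕ => buildF q.unpair.1 q.unpair.2 :=
    (primrec_buildF.comp (Primrec.fst.comp Primrec.unpair)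
      (Primrec.snd.comp Primrec.unpair)).to_comp
  obtain ⟨cbf2, hcbf2⟩ := exists_code.1 (Partrec.nat_iff.1 hbf2.partrec)
  set B : ℕ := encodeOC (toO cbf2) with hB
  set preI : ℕ := encodeOC (toO cpre) with hpreI
  set uXI : ℕ := encodeOC uX with huXI
  set eI : ℕ := encodeOC oId with heI
  set h : ℕ → ℕ := fun e => eComp (eComp B (ePair (cIdx e) eI)) (eComp uXI preI) with hhdef
  have hh : Computable h := by
    refine Primrec.to_comp ?_
    refine primrec_eComp.comp ?_ (Primrec.const (eComp uXI preI))
    exact primrec_eComp.comp (Primrec.const B)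
      (primrec_ePair.comp primrec_cIdx (Primrec.const eI))
  have hstage : ∀ e u, evalo (chi Y) ((toO cbf2).comp (.pair (ocConst e) oId)) u
      = Part.some (buildF e u) := by
    intro e u
    erw [evalo_comp, evalo_pair, evalo_ocConst, Part.bind_some, evalo_oId, Part.map_some,
      Part.bind_some, evalo_toO, hcbf2]
    show Part.some (buildF (Nat.pair e u).unpair.1 (Nat.pair e u).unpair.2)
      = Part.some (buildF e u)
    rw [Nat.unpair_pair]
  have hsem : ∀ e p, evalo (chi Y) (ocodeOfNat (h e)) p
      = (evalo (chi X) (ocodeOfNat p.unpair.1) (extIx p.unpair.2)).map (buildF e) := by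
    intro e p
    rw [hhdef]
    simp only
    rw [oc_eComp, oc_eComp, oc_eComp, oc_ePair, oc_cIdx, hB, heI, hpreI, huXI,
      ocodeOfNat_encodeOC, ocodeOfNat_encodeOC, ocodeOfNat_encodeOC, ocodeOfNat_encodeOC]
    rw [evalo_comp, evalo_comp, evalo_toO, hcpre]
    erw [PFun.coe_val, Part.bind_some, huX,
      show evalo (chi Y) ((toO cbf2).comp (OCode.pair (ocConst e) oId))
        = (Part.some ∘ buildF e : ℕ →. ℕ) from funext (hstage e),
      Part.bind_some_eq_map]
  obtain ⟨e₀, he₀⟩ := rec_thm uY huY h hh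
  set F : ℕ → ℕ := buildF e₀ with hFdef
  have key : ∀ n m, evalo (chi Y) (ocodeOfNat (F n)) (F m)
      = (evalo (chi X) (ocodeOfNat n) m).map F := by
    intro n m
    rw [hFdef]
    erw [oc_buildF, evalo_comp, evalo_pair, evalo_ocConst, Part.bind_some, evalo_oId,
      Part.map_some, Part.bind_some, he₀, hsem]
    simp [extIx_buildF]
  have hinj : Function.Injective F := by
    intro a b hab
    have := congrArg extIx hab
    rwa [hFdef, extIx_buildF, extIx_buildF] at this
  refine ⟨F, ⟨hinj, fun a b => ⟨?_, ?_⟩⟩, (primrec_buildF.comp (Primrec.const e₀)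
    Primrec.id).to_comp⟩
  · intro c hc
    have hc' : evalo (chi X) (ocodeOfNat a) b = Part.some c := hc
    show evalo (chi Y) (ocodeOfNat (F a)) (F b) = Part.some (F c)
    erw [key, hc', Part.map_some]
  · intro hnd
    have hnd' : ¬ (evalo (chi X) (ocodeOfNat a) b).Dom := hnd
    show ¬ (evalo (chi Y) (ocodeOfNat (F a)) (F b)).Dom
    erw [key]
    intro hd
    obtain ⟨v, hv⟩ := Part.dom_iff_mem.1 hd
    obtain ⟨w, hw, _⟩ := (Part.mem_map_iff _).1 hv
    exact hnd' (Part.dom_iff_mem.2 ⟨w, hw⟩)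

end S17
namespace S17
open Nat.Partrec (Code)
open Nat.Partrec.Code

lemma chiN_mem {X : Set ℕ} {n : ℕ} (h : n ∈ X) : chiN X n = 1 := by simp [chiN, h]
lemma chiN_notmem {X : Set ℕ} {n : ℕ} (h : n ∉ X) : chiN X n = 0 := by simp [chiN, h]

/-- A fixed code for `fun k => 1 - k`. -/
noncomputable def sub1C : Code :=
  Classical.choose (exists_code.1 (Partrec.nat_iff.1
    ((Primrec.nat_sub.comp (Primrec.const 1) Primrec.id).to_comp.partrec)))

lemma eval_sub1C (k : ℕ) : sub1C.eval k = Part.some (1 - k) := by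
  have := Classical.choose_spec (exists_code.1 (Partrec.nat_iff.1
    ((Primrec.nat_sub.comp (Primrec.const 1) Primrec.id).to_comp.partrec)))
  rw [show sub1C = Classical.choose _ from rfl, this]
  rfl

noncomputable def inO : OCode := oRfind (.comp (toO sub1C) (.comp .oracle .left))

def outO : OCode := oRfind (.comp .oracle .left)

lemma inO_body {X : Set ℕ} (n m : ℕ) :
    evalo (chi X) (.comp (toO sub1C) (.comp .oracle .left)) (Nat.pair n m)
      = Part.some (1 - chiN X n) := by
  erw [evalo_comp, evalo_comp, evalo_left, Part.bind_some, Nat.unpair_pair]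
  show ((chi X) n).bind _ = _
  erw [chi_eq, Part.bind_some, evalo_toO, eval_sub1C]

lemma outO_body {X : Set ℕ} (n m : ℕ) :
    evalo (chi X) (.comp .oracle .left) (Nat.pair n m) = Part.some (chiN X n) := by
  erw [evalo_comp, evalo_left, Part.bind_some, Nat.unpair_pair]
  show (chi X) n = _
  rw [chi_eq]

lemma rfind_const_true {p : ℕ → Part Bool} (hp : ∀ m, p m = Part.some true) :
    (0 : ℕ) ∈ Nat.rfind p :=
  Nat.mem_rfind.2 ⟨by rw [hp]; exact Part.mem_some true, fun h => absurd h (Nat.not_lt_zero _)⟩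

lemma rfind_const_false {p : ℕ → Part Bool} (hp : ∀ m, p m = Part.some false) :
    Nat.rfind p = Part.none := by
  refine Part.eq_none_iff'.2 fun hd => ?_
  obtain ⟨m, hm⟩ := Part.dom_iff_mem.1 hd
  have := Nat.rfind_spec hm
  rw [hp] at this
  simp at this

lemma inO_mem {X : Set ℕ} {n : ℕ} (h : n ∈ X) : evalo (chi X) inO n = Part.some 0 := by
  rw [inO, evalo_oRfind]
  refine Part.eq_some_iff.2 (rfind_const_true fun m => ?_)
  rw [inO_body, Part.map_eq_map, Part.map_some]
  simp [chiN_mem h]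

lemma inO_notmem {X : Set ℕ} {n : ℕ} (h : n ∉ X) : evalo (chi X) inO n = Part.none := by
  rw [inO, evalo_oRfind]
  refine rfind_const_false fun m => ?_
  rw [inO_body, Part.map_eq_map, Part.map_some]
  simp [chiN_notmem h]

lemma outO_mem {X : Set ℕ} {n : ℕ} (h : n ∈ X) : evalo (chi X) outO n = Part.none := by
  rw [outO, evalo_oRfind]
  refine rfind_const_false fun m => ?_
  rw [outO_body, Part.map_eq_map, Part.map_some]
  simp [chiN_mem h]

lemma outO_notmem {X : Set ℕ} {n : ℕ} (h : n ∉ X) : evalo (chi X) outO n = Part.some 0 := by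
  rw [outO, evalo_oRfind]
  refine Part.eq_some_iff.2 (rfind_const_true fun m => ?_)
  rw [outO_body, Part.map_eq_map, Part.map_some]
  simp [chiN_notmem h]

/-- `EvalnT` with a fixed code, in the searcher's calling convention. -/
noncomputable def EW (cc t w : ℕ) : ℕ := EvalnT t cc w.unpair.2.unpair.2 w.unpair.1

lemma computable_EW (cc : ℕ) : Computable fun p : ℕ × ℕ => EW cc p.1 p.2 := by
  have hpack : Primrec fun p : ℕ × ℕ =>
      Nat.pair p.1 (Nat.pair cc
        (Nat.pair p.2.unpair.2.unpair.2 p.2.unpair.1)) := by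
    have pu2 : Primrec fun p : ℕ × ℕ => p.2.unpair.2 :=
      Primrec.snd.comp (Primrec.unpair.comp Primrec.snd)
    exact Primrec₂.natPair.comp Primrec.fst
      (Primrec₂.natPair.comp (Primrec.const cc)
        (Primrec₂.natPair.comp (Primrec.snd.comp (Primrec.unpair.comp pu2))
          (Primrec.fst.comp (Primrec.unpair.comp Primrec.snd))))
  have := computable_EvalnT.comp hpack.to_comp
  refine this.of_eq fun p => ?_
  simp [EW, Nat.unpair_pair]

lemma forward {X Y : Set ℕ} (F : ℕ → ℕ) (hF : PAS.IsEmbedding (K1X X) (K1X Y) F) :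
    TuringRed X Y := by
  have happ1 : ∀ a b c : ℕ, evalo (chi X) (ocodeOfNat a) b = Part.some c →
      evalo (chi Y) (ocodeOfNat (F a)) (F b) = Part.some (F c) :=
    fun a b c h => (hF.2 a b).1 c h
  have happ2 : ∀ a b : ℕ, ¬ (evalo (chi X) (ocodeOfNat a) b).Dom →
      ¬ (evalo (chi Y) (ocodeOfNat (F a)) (F b)).Dom :=
    fun a b h => (hF.2 a b).2 h
  have hsucc : ∀ k : ℕ, evalo (chi Y) (ocodeOfNat (F 1)) (F k) = Part.some (F (k + 1)) := by
    intro k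
    refine happ1 1 k (k + 1) ?_
    rw [show ocodeOfNat 1 = OCode.succ from by rw [ocodeOfNat]]
    rfl
  -- the code computing `F` relative to Y
  have hfF : OComp (chi Y) F := by
    refine ⟨.comp (.prec (ocConst (F 0))
      (.comp (ocodeOfNat (F 1)) (.comp .right .right))) (.pair .zero oId), fun n => ?_⟩
    have key : ∀ m, evalo (chi Y) (.prec (ocConst (F 0))
        (.comp (ocodeOfNat (F 1)) (.comp .right .right))) (Nat.pair 0 m)
        = Part.some (F m) := by
      intro m
      induction m with
      | zero => rw [evalo_prec_zero, evalo_ocConst]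
      | succ k ih =>
          erw [evalo_prec_succ, ih, Part.bind_some, evalo_comp, evalo_comp, evalo_right,
            Part.bind_some, Nat.unpair_pair, evalo_right, Part.bind_some, Nat.unpair_pair,
            hsucc]
    have hz : evalo (chi Y) OCode.zero n = Part.some 0 := rfl
    erw [evalo_comp, evalo_pair, hz, Part.bind_some, evalo_oId, Part.map_some, Part.bind_some,
      key]
  obtain ⟨cF, hcF⟩ := hfF
  set inIdx : ℕ := encodeOC inO with hinIdx
  set outIdx : ℕ := encodeOC outO with houtIdx
  set cin : ℕ := F inIdx with hcin
  set cout : ℕ := F outIdx with hcout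
  have hIn_mem : ∀ n, n ∈ X →
      evalo (chi Y) (ocodeOfNat cin) (F n) = Part.some (F 0) := fun n hn =>
    happ1 inIdx n 0 (by rw [hinIdx, ocodeOfNat_encodeOC]; exact inO_mem hn)
  have hIn_not : ∀ n, n ∉ X → ¬ (evalo (chi Y) (ocodeOfNat cin) (F n)).Dom := fun n hn =>
    happ2 inIdx n (by rw [hinIdx, ocodeOfNat_encodeOC, inO_notmem hn]; simp)
  have hOut_mem : ∀ n, n ∉ X →
      evalo (chi Y) (ocodeOfNat cout) (F n) = Part.some (F 0) := fun n hn =>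
    happ1 outIdx n 0 (by rw [houtIdx, ocodeOfNat_encodeOC]; exact outO_notmem hn)
  have hOut_not : ∀ n, n ∈ X → ¬ (evalo (chi Y) (ocodeOfNat cout) (F n)).Dom := fun n hn =>
    happ2 outIdx n (by rw [houtIdx, ocodeOfNat_encodeOC, outO_mem hn]; simp)
  -- the searcher
  have hT : OComp (chi Y) (tblZ Y) := OComp_tblZ .oracle (fun n => rfl)
  have hsum : Computable fun p : ℕ × ℕ => EW cin p.1 p.2 + EW cout p.1 p.2 :=
    Primrec.nat_add.to_comp.comp (computable_EW cin) (computable_EW cout)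
  have hpr : Computable₂ fun t w => (if EW cin t w + EW cout t w = 0 then 1 else 0 : ℕ) := by
    have hbool : Computable fun p : ℕ × ℕ => decide (EW cin p.1 p.2 + EW cout p.1 p.2 = 0) :=
      Primrec.eq.decide.to_comp.comp hsum (Computable.const 0)
    have := Computable.cond hbool (Computable.const (1 : ℕ)) (Computable.const (0 : ℕ))
    refine this.of_eq fun p => ?_
    by_cases h : EW cin p.1 p.2 + EW cout p.1 p.2 = 0 <;> simp [h]
  have hfin : Computable₂ fun t w => (if EW cin t w = 0 then 0 else 1 : ℕ) := by
    have hbool : Computable fun p : ℕ × ℕ => decide (EW cin p.1 p.2 = 0) :=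
      Primrec.eq.decide.to_comp.comp (computable_EW cin) (Computable.const 0)
    have := Computable.cond hbool (Computable.const (0 : ℕ)) (Computable.const (1 : ℕ))
    refine this.of_eq fun p => ?_
    by_cases h : EW cin p.1 p.2 = 0 <;> simp [h]
  obtain ⟨D, hD⟩ := exists_search (chi Y) hT hpr hfin
  refine ⟨.comp D cF, fun n => ?_⟩
  erw [evalo_comp, hcF, Part.bind_some, hD, chi_eq]
  have hEW : ∀ (cc : ℕ) (m : ℕ), EW cc (tblZ Y m.unpair.1) (Nat.pair (F n) m)
      = EvalnT (tblZ Y m.unpair.1) cc m.unpair.2 (F n) := by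
    intro cc m
    simp [EW, Nat.unpair_pair]
  by_cases hx : n ∈ X
  · obtain ⟨j, k, hjk⟩ := EvalnT_complete (Z := Y) (hIn_mem n hx)
    have hex : ∃ m : ℕ, decide ((if EW cin (tblZ Y m.unpair.1) (Nat.pair (F n) m)
        + EW cout (tblZ Y m.unpair.1) (Nat.pair (F n) m) = 0 then 1 else 0 : ℕ) = 0)
        = true := by
      refine ⟨Nat.pair j k, ?_⟩
      rw [hEW, hEW]
      simp only [Nat.unpair_pair]
      rw [hjk]
      simp
    obtain ⟨m₀, hm₀⟩ := rfind_total_mem hex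
    have hspec := rfind_total_spec hm₀
    rw [hEW, hEW] at hspec
    have hsumne : EvalnT (tblZ Y m₀.unpair.1) cin m₀.unpair.2 (F n)
        + EvalnT (tblZ Y m₀.unpair.1) cout m₀.unpair.2 (F n) ≠ 0 := by
      by_contra h0
      rw [h0] at hspec
      simp at hspec
    have hE2 : EvalnT (tblZ Y m₀.unpair.1) cout m₀.unpair.2 (F n) = 0 := by
      by_contra hne
      obtain ⟨w, hw⟩ := Nat.exists_eq_succ_of_ne_zero hne
      have := EvalnT_sound (Z := Y) hw
      exact hOut_not n hx (by rw [this]; trivial)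
    have hE1 : EvalnT (tblZ Y m₀.unpair.1) cin m₀.unpair.2 (F n) ≠ 0 := by omega
    refine Part.eq_some_iff.2 (Part.mem_bind_iff.2 ⟨m₀, hm₀, ?_⟩)
    rw [hEW]
    rw [chiN_mem hx]
    simp [hE1]
  · obtain ⟨j, k, hjk⟩ := EvalnT_complete (Z := Y) (hOut_mem n hx)
    have hex : ∃ m : ℕ, decide ((if EW cin (tblZ Y m.unpair.1) (Nat.pair (F n) m)
        + EW cout (tblZ Y m.unpair.1) (Nat.pair (F n) m) = 0 then 1 else 0 : ℕ) = 0)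
        = true := by
      refine ⟨Nat.pair j k, ?_⟩
      rw [hEW, hEW]
      simp only [Nat.unpair_pair]
      rw [hjk]
      simp
    obtain ⟨m₀, hm₀⟩ := rfind_total_mem hex
    have hE1 : EvalnT (tblZ Y m₀.unpair.1) cin m₀.unpair.2 (F n) = 0 := by
      by_contra hne
      obtain ⟨w, hw⟩ := Nat.exists_eq_succ_of_ne_zero hne
      have := EvalnT_sound (Z := Y) hw
      exact hIn_not n hx (by rw [this]; trivial)
    refine Part.eq_some_iff.2 (Part.mem_bind_iff.2 ⟨m₀, hm₀, ?_⟩)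
    rw [hEW]
    rw [chiN_notmem hx]
    simp [hE1]

end S17
/-- K₁^X embeds into K₁^Y iff X ≤_T Y; moreover when X ≤_T Y the
embedding can be chosen computable. -/
theorem stmt17 (X Y : Set ℕ) :
    ((∃ F : ℕ → ℕ, PAS.IsEmbedding (K1X X) (K1X Y) F) ↔ TuringRed X Y) ∧
    (TuringRed X Y →
      ∃ F : ℕ → ℕ, PAS.IsEmbedding (K1X X) (K1X Y) F ∧ Computable F) := by
  constructor
  · constructor
    · rintro ⟨F, hF⟩
      exact S17.forward F hF
    · intro h
      obtain ⟨F, hF, _⟩ := S17.backward h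
      exact ⟨F, hF⟩
  · exact fun h => S17.backward h
end
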